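/- arXiv:1611.06144 — 2 statements merged into one kernel-verified Lean document; each statement's English description precedes it below -/
import Mathlib

section
/- For every group-like element s ∈ G(A), the linear map ŝ : ℤS → K⟨⟨A⟩⟩ defined by ŝ(σ) := Σ_{w∈A*} (s, σ·w) w is an algebra homomorphism from the Malvenuto–Reutenauer algebra (ℤS, *′) to (K⟨⟨A⟩⟩, conc): conc(ŝ(σ) ⊗ ŝ(ρ)) = ŝ(σ *′ ρ) for all σ, ρ ∈ ℤS. -/
def shuffle {A : Type*} : List A → List A → Multiset (List A)
  | [], w => {w}
  | u, [] => {u}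
  | a :: u, b :: v => (shuffle u (b :: v)).map (a :: ·) + (shuffle (a :: u) v).map (b :: ·)
termination_by u v => u.length + v.length
decreasing_by all_goals simp +arith +decide

def IsPermWord (w : List ℕ) : Prop := w.Perm (List.range w.length)

/-- MR product on permutation words: `σ *′ ρ := sh(σ ⊗ ρ̄)`, `ρ̄(i) = |σ| + ρ(i)`. -/
def mrW (u v : List ℕ) : Multiset (List ℕ) := shuffle u (v.map (· + u.length))

/-- ℤ-bilinear extension of the MR product. -/
noncomputable def mrMul (p q : List ℕ →₀ ℤ) : List ℕ →₀ ℤ :=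
  p.sum fun u a => q.sum fun v b =>
    (a * b) • ((mrW u v).map (fun w => Finsupp.single w (1 : ℤ))).sum

/-- The action of a permutation word `σ ∈ Sₙ` on words: `σ·(a₁⋯aₙ) = a_{σ1}⋯a_{σn}`
(0-indexed). -/
def applyW {A : Type*} [Inhabited A] (σ : List ℕ) (w : List A) : List A :=
  σ.map fun i => w.getD i default

/-- A series is group-like iff it is a shuffle character with `(s,e)=1`. -/
def GroupLikeSeries {A : Type*} {K : Type*} [CommRing K] [Algebra ℚ K] (s : List A → K) : Prop :=
  s [] = 1 ∧ ∀ u v : List A, ((shuffle u v).map s).sum = s u * s v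

/-- `ŝ(σ) := Σ_{w ∈ A*} (s, σ·w) w`, extended ℤ-linearly to `ℤS`, as a series. -/
noncomputable def shat {A : Type*} [Inhabited A] {K : Type*} [CommRing K] [Algebra ℚ K]
    (s : List A → K) (P : List ℕ →₀ ℤ) : List A → K :=
  fun w => P.sum fun σ c => (c : K) * (if w.length = σ.length then s (applyW σ w) else 0)

/-- The concatenation product of series. -/
def concSeries {A : Type*} {K : Type*} [CommRing K] [Algebra ℚ K]
    (s t : List A → K) : List A → K :=
  fun w => ∑ k ∈ Finset.range (w.length + 1), s (w.take k) * t (w.drop k)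

lemma mem_shuffle_length {A : Type*} (u v : List A) :
    ∀ τ ∈ shuffle u v, τ.length = u.length + v.length := by
  induction u, v using shuffle.induct with
  | case1 w => simp [shuffle]
  | case2 u => simp [shuffle]
  | case3 a u b v ih1 ih2 =>
    intro τ hτ
    rw [shuffle] at hτ
    simp only [Multiset.mem_add, Multiset.mem_map] at hτ
    rcases hτ with ⟨x, hx, rfl⟩ | ⟨x, hx, rfl⟩
    · simp [ih1 x hx]; omega
    · simp [ih2 x hx]; omega

lemma shuffle_map {A B : Type*} (f : A → B) (u v : List A) :
    (shuffle u v).map (List.map f) = shuffle (u.map f) (v.map f) := by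
  induction u, v using shuffle.induct with
  | case1 w => simp [shuffle]
  | case2 u => cases u <;> simp [shuffle]
  | case3 a u b v ih1 ih2 =>
    rw [shuffle, List.map_cons, List.map_cons, shuffle]
    rw [List.map_cons] at ih1; rw [List.map_cons] at ih2
    simp only [Multiset.map_add, Multiset.map_map, ← ih1, ← ih2, Function.comp_def, List.map_cons]

lemma mem_mrW_length (σ ρ : List ℕ) : ∀ τ ∈ mrW σ ρ, τ.length = σ.length + ρ.length := by
  intro τ hτ
  have := mem_shuffle_length _ _ τ hτ
  simpa using this

lemma key_lemma {A : Type*} [Inhabited A] {K : Type*} [CommRing K] [Algebra ℚ K]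
    (s : List A → K) (hs : GroupLikeSeries s) (σ ρ : List ℕ) (hσ : IsPermWord σ)
    (w : List A) (h : w.length = σ.length + ρ.length) :
    ((mrW σ ρ).map (fun τ => s (applyW τ w))).sum
      = s (applyW σ (w.take σ.length)) * s (applyW ρ (w.drop σ.length)) := by
  have hfun : (fun τ => s (applyW τ w)) = s ∘ (List.map fun i => w.getD i default) := rfl
  rw [hfun, ← Multiset.map_map, mrW, shuffle_map]
  have h1 : σ.map (fun i => w.getD i default) = applyW σ (w.take σ.length) := by
    unfold applyW
    refine List.map_congr_left fun i hi => ?_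
    have hlt : i < σ.length := by
      have := hσ.mem_iff.mp hi
      simpa using this
    simp [List.getD_eq_getElem?_getD, List.getElem?_take, hlt]
  have h2 : (ρ.map (· + σ.length)).map (fun i => w.getD i default)
      = applyW ρ (w.drop σ.length) := by
    unfold applyW
    rw [List.map_map]
    refine List.map_congr_left fun i _ => ?_
    simp [List.getD_eq_getElem?_getD, List.getElem?_drop, Nat.add_comm]
  rw [h1, h2, hs.2]

/-- for group-like `s`, the map `ŝ : ℤS → K⟨⟨A⟩⟩` is an algebra
homomorphism from the Malvenuto–Reutenauer algebra `(ℤS, *′)` to `(K⟨⟨A⟩⟩, conc)`: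
`conc(ŝ(σ) ⊗ ŝ(ρ)) = ŝ(σ *′ ρ)`. -/
theorem shat_algebra_hom {A : Type*} [Inhabited A] {K : Type*} [CommRing K] [Algebra ℚ K]
    (s : List A → K) (hs : GroupLikeSeries s) (P Q : List ℕ →₀ ℤ)
    (hP : ∀ w ∈ P.support, IsPermWord w) (hQ : ∀ w ∈ Q.support, IsPermWord w) :
    concSeries (shat s P) (shat s Q) = shat s (mrMul P Q) := by
  funext w
  set g : List ℕ → K := fun τ => if w.length = τ.length then s (applyW τ w) else 0 with hg
  have Lshat : ∀ R : List ℕ →₀ ℤ, shat s R w = Finsupp.linearCombination ℤ g R := by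
    intro R
    rw [Finsupp.linearCombination_apply]
    refine Finsupp.sum_congr fun σ _ => ?_
    rw [zsmul_eq_mul, hg]

  -- RHS computation
  have hR : shat s (mrMul P Q) w
      = ∑ σ ∈ P.support, ∑ ρ ∈ Q.support,
          (P σ * Q ρ : ℤ) • ((mrW σ ρ).map g).sum := by
    rw [Lshat, mrMul, map_finsuppSum]
    refine Finset.sum_congr rfl fun σ _ => ?_
    dsimp only
    rw [map_finsuppSum]
    refine Finset.sum_congr rfl fun ρ _ => ?_
    dsimp only
    rw [map_zsmul, map_multiset_sum, Multiset.map_map]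
    congr 2
    refine Multiset.map_congr rfl fun τ _ => ?_
    simp [Finsupp.linearCombination_single]
  -- LHS computation
  have hL : concSeries (shat s P) (shat s Q) w
      = ∑ σ ∈ P.support, ∑ ρ ∈ Q.support, ∑ k ∈ Finset.range (w.length + 1),
          ((P σ : K) * (if (w.take k).length = σ.length then s (applyW σ (w.take k)) else 0))
          * ((Q ρ : K) * (if (w.drop k).length = ρ.length then s (applyW ρ (w.drop k)) else 0)) := by
    rw [show concSeries (shat s P) (shat s Q) w
        = ∑ k ∈ Finset.range (w.length + 1), shat s P (w.take k) * shat s Q (w.drop k) from rfl]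
    unfold shat Finsupp.sum
    simp only [Finset.sum_mul, Finset.mul_sum]
    refine (Finset.sum_comm).trans ?_
    refine (Finset.sum_congr rfl fun ρ _ => Finset.sum_comm).trans ?_
    exact Finset.sum_comm
  rw [hL, hR]
  refine Finset.sum_congr rfl fun σ hσmem => Finset.sum_congr rfl fun ρ hρmem => ?_
  have hσ := hP σ hσmem
  by_cases h : w.length = σ.length + ρ.length
  · -- single surviving term k = σ.length
    have hσle : σ.length ≤ w.length := by omega
    rw [Finset.sum_eq_single_of_mem σ.length (by simp; omega)]
    · rw [if_pos (by simp [List.length_take]; omega), if_pos (by simp [List.length_drop]; omega)]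
      have hmap : (mrW σ ρ).map g = (mrW σ ρ).map (fun τ => s (applyW τ w)) := by
        refine Multiset.map_congr rfl fun τ hτ => ?_
        have hlen : w.length = τ.length := by rw [mem_mrW_length σ ρ τ hτ]; omega
        simp [hg, hlen]
      rw [hmap, key_lemma s hs σ ρ hσ w h, zsmul_eq_mul]
      push_cast
      ring
    · intro k hk hkne
      simp only [Finset.mem_range] at hk
      rw [if_neg (by simp [List.length_take]; omega)]
      ring
  · -- everything vanishes
    have h1 : ∑ k ∈ Finset.range (w.length + 1),
        ((P σ : K) * (if (w.take k).length = σ.length then s (applyW σ (w.take k)) else 0))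
        * ((Q ρ : K) * (if (w.drop k).length = ρ.length then s (applyW ρ (w.drop k)) else 0)) = 0 := by
      refine Finset.sum_eq_zero fun k hk => ?_
      simp only [Finset.mem_range] at hk
      rw [List.length_take, List.length_drop]
      split_ifs <;> first | omega | ring
    rw [h1]
    have h2 : (mrW σ ρ).map g = (mrW σ ρ).map (fun _ => (0 : K)) := by
      refine Multiset.map_congr rfl fun τ hτ => ?_
      have hlen : ¬ w.length = τ.length := by rw [mem_mrW_length σ ρ τ hτ]; exact h
      simp [hg, hlen]
    rw [h2]
    simp
end

section
/- Shuffle of left-iterated half-shuffle products: for p₁,…,p_{n+m} ∈ K⟨A⟩ with no constant term, sh(m_≻(p₁,…,pₙ) ⊗ m_≻(p_{n+1},…,p_{n+m})) = Σ_{ρ ∈ 1ₙ *′ 1ₘ} m_≻(p_{ρ(1)},…,p_{ρ(n+m)}), where the sum is over the (n+m choose n) permutations appearing in the shuffle 1ₙ *′ 1ₘ of identity permutations. -/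
@[simp] lemma shuffle_nil_left {A : Type*} (v : List A) : shuffle [] v = {v} := by
  cases v <;> simp [shuffle]
@[simp] lemma shuffle_nil_right {A : Type*} (u : List A) : shuffle u [] = {u} := by
  cases u <;> simp [shuffle]
lemma shuffle_cons_cons {A : Type*} (a b : A) (u v : List A) :
    shuffle (a :: u) (b :: v) =
      (shuffle u (b :: v)).map (a :: ·) + (shuffle (a :: u) v).map (b :: ·) := by
  simp [shuffle]

lemma shuffle_comm {A : Type*} : ∀ (u v : List A), shuffle u v = shuffle v u
  | [], v => by simp
  | u, [] => by simp
  | a :: u, b :: v => by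
    rw [shuffle_cons_cons, shuffle_cons_cons, shuffle_comm u (b::v), shuffle_comm (a::u) v,
      add_comm]
termination_by u v => u.length + v.length
decreasing_by all_goals simp +arith +decide

lemma shuffle_snoc_snoc {A : Type*} (a b : A) : ∀ (u v : List A),
    shuffle (u ++ [a]) (v ++ [b]) =
      (shuffle u (v ++ [b])).map (· ++ [a]) + (shuffle (u ++ [a]) v).map (· ++ [b])
  | [], [] => by
    simp [shuffle]
    exact Multiset.cons_swap _ _ _
  | [], d :: v => by
    have ih := shuffle_snoc_snoc a b [] v
    simp only [List.nil_append, List.cons_append] at ih ⊢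
    rw [shuffle_cons_cons, ih, shuffle_cons_cons]
    simp only [Multiset.map_add, Multiset.map_map, Function.comp, shuffle_nil_left,
      Multiset.map_singleton, List.cons_append, List.nil_append]
    abel
  | c :: u, [] => by
    have ih := shuffle_snoc_snoc a b u []
    simp only [List.nil_append, List.cons_append] at ih ⊢
    rw [shuffle_cons_cons, ih, shuffle_cons_cons]
    simp only [Multiset.map_add, Multiset.map_map, Function.comp, shuffle_nil_right,
      Multiset.map_singleton, List.cons_append, List.nil_append]
    abel
  | c :: u, d :: v => by
    have ih1 := shuffle_snoc_snoc a b u (d :: v)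
    have ih2 := shuffle_snoc_snoc a b (c :: u) v
    simp only [List.cons_append] at ih1 ih2 ⊢
    rw [shuffle_cons_cons, ih1, ih2, shuffle_cons_cons, shuffle_cons_cons]
    simp only [Multiset.map_add, Multiset.map_map, Function.comp, List.cons_append]
    abel
termination_by u v => u.length + v.length
decreasing_by all_goals simp +arith +decide

@[simp] lemma Multiset.bind_id {α : Type*} (s : Multiset α) :
    (s.bind fun x => ({x} : Multiset α)) = s :=
  by simpa using Multiset.bind_singleton (s := s) (id : α → α)

lemma shuffle_assoc {A : Type*} : ∀ (u v t : List A),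
    (shuffle u v).bind (shuffle · t) = (shuffle v t).bind (shuffle u ·)
  | [], v, t => by simp [Multiset.singleton_bind]
  | u, [], t => by simp [Multiset.singleton_bind]
  | u, v, [] => by simp [Multiset.singleton_bind]
  | a :: u, b :: v, c :: t => by
    have ih1 := shuffle_assoc u (b :: v) (c :: t)
    have ih2 := shuffle_assoc (a :: u) v (c :: t)
    have ih3 := shuffle_assoc (a :: u) (b :: v) t
    -- expand LHS
    rw [shuffle_cons_cons a b, Multiset.add_bind, Multiset.bind_map, Multiset.bind_map]
    rw [Multiset.bind_congr (fun w _ => shuffle_cons_cons a c w t),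
        Multiset.bind_congr (fun w _ => shuffle_cons_cons b c w t)]
    rw [Multiset.bind_add, Multiset.bind_add, ← Multiset.map_bind, ← Multiset.map_bind,
        ← Multiset.map_bind, ← Multiset.map_bind]
    -- expand RHS
    rw [shuffle_cons_cons b c, Multiset.add_bind, Multiset.bind_map, Multiset.bind_map]
    rw [Multiset.bind_congr (fun w _ => shuffle_cons_cons a b u w),
        Multiset.bind_congr (fun w _ => shuffle_cons_cons a c u w)]
    rw [Multiset.bind_add, Multiset.bind_add, ← Multiset.map_bind, ← Multiset.map_bind,
        ← Multiset.map_bind, ← Multiset.map_bind]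
    rw [ih1, ih2]
    rw [show (shuffle (b :: v) (c :: t)).bind (shuffle u ·) =
        ((shuffle v (c :: t)).bind fun w => shuffle u (b :: w)) +
        ((shuffle (b :: v) t).bind fun w => shuffle u (c :: w)) by
      rw [shuffle_cons_cons b c, Multiset.add_bind, Multiset.bind_map, Multiset.bind_map]]
    rw [← ih3]
    rw [shuffle_cons_cons a b, Multiset.add_bind, Multiset.bind_map, Multiset.bind_map]
    simp only [Multiset.map_add]
    abel
termination_by u v t => u.length + v.length + t.length
decreasing_by all_goals simp +arith +decide

/-- The right half-shuffle on words. -/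
def succW {A : Type*} (u v : List A) : Multiset (List A) :=
  match v.getLast? with
  | none => 0
  | some a => (shuffle u v.dropLast).map (fun w => w ++ [a])

@[simp] lemma succW_nil_right {A : Type*} (u : List A) : succW u [] = 0 := rfl

@[simp] lemma succW_snoc {A : Type*} (u v : List A) (b : A) :
    succW u (v ++ [b]) = (shuffle u v).map (· ++ [b]) := by
  simp [succW, List.getLast?_concat, List.dropLast_concat]

lemma succW_ne_nil {A : Type*} {u v w : List A} (h : w ∈ succW u v) : w ≠ [] := by
  rcases v.eq_nil_or_concat with rfl | ⟨v', b, rfl⟩ <;> [skip; rw [List.concat_eq_append] at *]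
  · simp at h
  · rw [succW_snoc] at h
    rcases Multiset.mem_map.1 h with ⟨x, _, rfl⟩
    simp

lemma succW_succW {A : Type*} (u v w : List A) :
    (succW v w).bind (succW u ·) = (shuffle u v).bind (succW · w) := by
  rcases w.eq_nil_or_concat with rfl | ⟨w', c, rfl⟩ <;> [skip; rw [List.concat_eq_append] at *]
  · simp
  · rw [succW_snoc, Multiset.bind_map]
    rw [Multiset.bind_congr (fun x _ => succW_snoc u x c),
        Multiset.bind_congr (fun y _ => succW_snoc y w' c)]
    rw [← Multiset.map_bind, ← Multiset.map_bind, ← shuffle_assoc]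

lemma shuffle_eq_succ_add_succ {A : Type*} {u : List A} (hu : u ≠ []) (v : List A) :
    shuffle u v = succW u v + succW v u := by
  rcases u.eq_nil_or_concat with rfl | ⟨u', a, rfl⟩
  · exact absurd rfl hu
  rw [List.concat_eq_append]
  rcases v.eq_nil_or_concat with rfl | ⟨v', b, rfl⟩
  · simp
  rw [List.concat_eq_append, shuffle_snoc_snoc, succW_snoc, succW_snoc,
    shuffle_comm (v' ++ [b]) u', add_comm]

/-- Bilinear extension of the half-shuffle to `K⟨A⟩`. -/
noncomputable def succPoly {A : Type*} {K : Type*} [CommRing K] [Algebra ℚ K]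
    (p q : List A →₀ K) : List A →₀ K :=
  p.sum fun u a => q.sum fun v b =>
    (a * b) • ((succW u v).map (fun w => Finsupp.single w (1 : K))).sum

/-- Bilinear extension of the shuffle product to `K⟨A⟩`. -/
noncomputable def shPoly {A : Type*} {K : Type*} [CommRing K] [Algebra ℚ K]
    (p q : List A →₀ K) : List A →₀ K :=
  p.sum fun u a => q.sum fun v b =>
    (a * b) • ((shuffle u v).map (fun w => Finsupp.single w (1 : K))).sum

section Poly
set_option linter.unusedSectionVars false
variable {A : Type*} {K : Type*} [CommRing K] [Algebra ℚ K]

/-- `TT M = Σ_{w ∈ M} w` as an element of `K⟨A⟩`. -/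
noncomputable def TT (M : Multiset (List A)) : List A →₀ K :=
  (M.map (fun w => Finsupp.single w (1 : K))).sum

@[simp] lemma TT_zero : (TT 0 : List A →₀ K) = 0 := rfl

@[simp] lemma TT_add (M N : Multiset (List A)) : (TT (M + N) : List A →₀ K) = TT M + TT N := by
  simp [TT]

@[simp] lemma TT_cons (w : List A) (M : Multiset (List A)) :
    (TT (w ::ₘ M) : List A →₀ K) = Finsupp.single w 1 + TT M := by
  simp [TT]

lemma TT_apply_nil {M : Multiset (List A)} (h : ∀ w ∈ M, w ≠ []) :
    (TT M : List A →₀ K) [] = 0 := by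
  induction M using Multiset.induction with
  | empty => simp
  | cons w s ih =>
    have hw : w ≠ [] := h w (Multiset.mem_cons_self w s)
    rw [TT_cons, Finsupp.add_apply, ih (fun x hx => h x (Multiset.mem_cons_of_mem hx)),
      add_zero, Finsupp.single_eq_of_ne' hw]

/-- common shape of `succPoly` and `shPoly` -/
noncomputable def bil (F : List A → List A → Multiset (List A)) (p q : List A →₀ K) :
    List A →₀ K :=
  p.sum fun u a => q.sum fun v b => (a * b) • TT (F u v)

lemma succPoly_eq_bil (p q : List A →₀ K) : succPoly p q = bil succW p q := rfl

lemma shPoly_eq_bil (p q : List A →₀ K) : shPoly p q = bil shuffle p q := rfl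

variable (F : List A → List A → Multiset (List A))

@[simp] lemma bil_zero_left (q : List A →₀ K) : bil F 0 q = 0 := by
  simp [bil]

@[simp] lemma bil_zero_right (p : List A →₀ K) : bil F p 0 = 0 := by
  simp [bil]

lemma bil_add_left (p₁ p₂ q : List A →₀ K) :
    bil F (p₁ + p₂) q = bil F p₁ q + bil F p₂ q := by
  unfold bil
  apply Finsupp.sum_add_index' <;> intros <;>
    simp [add_mul, add_smul, Finsupp.sum_add]

lemma bil_add_right (p q₁ q₂ : List A →₀ K) :
    bil F p (q₁ + q₂) = bil F p q₁ + bil F p q₂ := by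
  unfold bil
  rw [← Finsupp.sum_add]
  apply Finsupp.sum_congr
  intro u _
  apply Finsupp.sum_add_index' <;> intros <;>
    simp [mul_add, smul_add, add_smul]

lemma bil_smul_left (c : K) (p q : List A →₀ K) : bil F (c • p) q = c • bil F p q := by
  unfold bil
  rw [Finsupp.sum_smul_index, Finsupp.smul_sum]
  · apply Finsupp.sum_congr
    intro u _
    rw [Finsupp.smul_sum]
    apply Finsupp.sum_congr
    intro v _
    rw [mul_assoc, smul_smul]
  · intro u; simp

lemma bil_smul_right (c : K) (p q : List A →₀ K) : bil F p (c • q) = c • bil F p q := by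
  unfold bil
  rw [Finsupp.smul_sum]
  apply Finsupp.sum_congr
  intro u _
  rw [Finsupp.sum_smul_index, Finsupp.smul_sum]
  · apply Finsupp.sum_congr
    intro v _
    rw [smul_smul]
    congr 1
    ring
  · intro v; simp

lemma bil_single_single (u v : List A) (a b : K) :
    bil F (Finsupp.single u a) (Finsupp.single v b) = (a * b) • TT (F u v) := by
  unfold bil
  rw [Finsupp.sum_single_index, Finsupp.sum_single_index]
  · simp
  · simp [Finsupp.sum_single_index]

lemma bil_single_TT (u : List A) (a : K) (M : Multiset (List A)) :
    bil F (Finsupp.single u a) (TT M) = a • TT (M.bind (F u ·)) := by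
  induction M using Multiset.induction with
  | empty => simp
  | cons w s ih =>
    rw [TT_cons, bil_add_right, ih, Multiset.cons_bind, TT_add, smul_add]
    congr 1
    rw [bil_single_single]
    simp

lemma bil_TT_single (w : List A) (c : K) (M : Multiset (List A)) :
    bil F (TT M) (Finsupp.single w c) = c • TT (M.bind (F · w)) := by
  induction M using Multiset.induction with
  | empty => simp
  | cons x s ih =>
    rw [TT_cons, bil_add_left, ih, Multiset.cons_bind, TT_add, smul_add]
    congr 1
    rw [bil_single_single]
    simp

end Poly

section Poly2
set_option linter.unusedSectionVars false
variable {A : Type*} {K : Type*} [CommRing K] [Algebra ℚ K]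

lemma succPoly_apply_nil (p q : List A →₀ K) : succPoly p q [] = 0 := by
  rw [succPoly_eq_bil]
  unfold bil
  rw [Finsupp.sum_apply]
  rw [Finsupp.sum_congr (g2 := fun _ _ => 0)]
  · exact Finset.sum_const_zero
  intro u _
  rw [Finsupp.sum_apply]
  rw [Finsupp.sum_congr (g2 := fun _ _ => 0)]
  · exact Finset.sum_const_zero
  intro v _
  rw [Finsupp.smul_apply, TT_apply_nil (fun w hw => succW_ne_nil hw), smul_zero]

lemma shPoly_split {p : List A →₀ K} (h : p [] = 0) (q : List A →₀ K) :
    shPoly p q = succPoly p q + succPoly q p := by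
  rw [shPoly_eq_bil, succPoly_eq_bil, succPoly_eq_bil]
  unfold bil
  have step1 : (p.sum fun u a => q.sum fun v b => (a * b) • (TT (shuffle u v) : List A →₀ K)) =
      p.sum fun u a => (q.sum fun v b => (a * b) • TT (succW u v)) +
        (q.sum fun v b => (a * b) • TT (succW v u)) := by
    apply Finsupp.sum_congr
    intro u hu
    have hune : u ≠ [] := by
      intro hue; subst hue; exact (Finsupp.mem_support_iff.1 hu) h
    rw [← Finsupp.sum_add]
    apply Finsupp.sum_congr
    intro v _
    rw [shuffle_eq_succ_add_succ hune, TT_add, smul_add]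
  rw [step1, Finsupp.sum_add]
  congr 1
  rw [Finsupp.sum_comm]
  apply Finsupp.sum_congr
  intro v _
  apply Finsupp.sum_congr
  intro u _
  rw [mul_comm]

lemma zinbiel (p q r : List A →₀ K) :
    succPoly p (succPoly q r) = succPoly (shPoly p q) r := by
  simp only [succPoly_eq_bil, shPoly_eq_bil]
  induction p using Finsupp.induction_linear with
  | zero => simp
  | add p₁ p₂ ih₁ ih₂ => rw [bil_add_left, bil_add_left, bil_add_left, ih₁, ih₂]
  | single u a =>
    induction q using Finsupp.induction_linear with
    | zero => simp
    | add q₁ q₂ ih₁ ih₂ =>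
      rw [bil_add_left (F := succW) q₁ q₂ r, bil_add_right, bil_add_right (F := shuffle),
        bil_add_left, ih₁, ih₂]
    | single v b =>
      induction r using Finsupp.induction_linear with
      | zero => simp
      | add r₁ r₂ ih₁ ih₂ =>
        rw [bil_add_right (F := succW) (Finsupp.single v b) r₁ r₂, bil_add_right, bil_add_right,
          ih₁, ih₂]
      | single w c =>
        rw [bil_single_single, bil_single_single, bil_smul_right, bil_smul_left,
          bil_single_TT, bil_TT_single, succW_succW]
        rw [smul_smul, smul_smul]
        congr 1
        ring

end Poly2

/-- Left-iterated half-shuffle product `m_≻(p₁,…,pₙ) = (⋯(p₁ ≻ p₂) ≻ ⋯) ≻ pₙ`. -/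
noncomputable def msucc {A : Type*} {K : Type*} [CommRing K] [Algebra ℚ K] :
    List (List A →₀ K) → (List A →₀ K)
  | [] => 0
  | p :: ps => ps.foldl succPoly p

section Main
set_option linter.unusedSectionVars false
variable {A : Type*} {K : Type*} [CommRing K] [Algebra ℚ K]

lemma msucc_append_single (l : List (List A →₀ K)) (hl : l ≠ []) (q : List A →₀ K) :
    msucc (l ++ [q]) = succPoly (msucc l) q := by
  cases l with
  | nil => exact absurd rfl hl
  | cons x xs => simp [msucc, List.foldl_append]

lemma bil_msum_left (F : List A → List A → Multiset (List A)) {X : Type*} (S : Multiset X)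
    (f : X → (List A →₀ K)) (q : List A →₀ K) :
    bil F ((S.map f).sum) q = (S.map fun x => bil F (f x) q).sum := by
  induction S using Multiset.induction with
  | empty => simp
  | cons x s ih => simp [bil_add_left, ih]

lemma mem_shuffle_ne_nil {B : Type*} {u v w : List B} (hu : u ≠ []) (h : w ∈ shuffle u v) :
    w ≠ [] := by
  cases u with
  | nil => exact absurd rfl hu
  | cons a u' =>
    cases v with
    | nil =>
      simp only [shuffle_nil_right, Multiset.mem_singleton] at h
      subst h; simp
    | cons b v' =>
      rw [shuffle_cons_cons, Multiset.mem_add, Multiset.mem_map, Multiset.mem_map] at h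
      rcases h with ⟨x, _, rfl⟩ | ⟨x, _, rfl⟩ <;> simp

lemma msucc_map_apply_nil (p : ℕ → List A →₀ K) {s : List ℕ} (hs : s ≠ [])
    (h : ∀ i ∈ s, p i [] = 0) : msucc (s.map p) [] = 0 := by
  rcases s.eq_nil_or_concat with rfl | ⟨l, i, rfl⟩
  · exact absurd rfl hs
  rw [List.concat_eq_append] at *
  cases l with
  | nil =>
    simp only [List.nil_append, List.map_cons, List.map_nil]
    exact h i (by simp)
  | cons x xs =>
    simp only [List.map_append, List.map_cons, List.map_nil]
    rw [msucc_append_single _ (by simp)]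
    exact succPoly_apply_nil _ _

lemma L2 (p : ℕ → List A →₀ K) (s t : List ℕ) (b : ℕ) (hs : s ≠ [])
    (hL : t ≠ [] → shPoly (msucc (s.map p)) (msucc (t.map p)) =
      ((shuffle s t).map fun ρ => msucc (ρ.map p)).sum) :
    succPoly (msucc (s.map p)) (msucc ((t ++ [b]).map p)) =
      ((shuffle s t).map fun ρ => msucc ((ρ ++ [b]).map p)).sum := by
  have hmap : ∀ (l : List ℕ), (l ++ [b]).map p = l.map p ++ [p b] := by simp
  rcases eq_or_ne t [] with rfl | ht
  · simp only [shuffle_nil_right, Multiset.map_singleton, Multiset.sum_singleton, hmap,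
      List.nil_append]
    rw [msucc_append_single _ (by simpa using hs)]
    rfl
  · rw [hmap, msucc_append_single _ (by simpa using ht), zinbiel, hL ht,
      succPoly_eq_bil, bil_msum_left]
    apply congrArg
    apply Multiset.map_congr rfl
    intro ρ hρ
    rw [hmap, msucc_append_single _ (by simpa using mem_shuffle_ne_nil hs hρ),
      succPoly_eq_bil]

lemma mainL (p : ℕ → List A →₀ K) : ∀ (N : ℕ) (s t : List ℕ),
    s.length + t.length ≤ N → s ≠ [] → t ≠ [] →
    (∀ i ∈ s, p i [] = 0) → (∀ i ∈ t, p i [] = 0) →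
    shPoly (msucc (s.map p)) (msucc (t.map p)) =
      ((shuffle s t).map fun ρ => msucc (ρ.map p)).sum := by
  intro N
  induction N with
  | zero =>
    intro s t hlen hs ht _ _
    exfalso
    cases s with
    | nil => exact hs rfl
    | cons a s' => simp at hlen
  | succ N ih =>
    intro s t hlen hs ht hs0 ht0
    rcases s.eq_nil_or_concat with rfl | ⟨s', a, rfl⟩
    · exact absurd rfl hs
    rcases t.eq_nil_or_concat with rfl | ⟨t', b, rfl⟩
    · exact absurd rfl ht
    simp only [List.concat_eq_append] at *
    have hlen1 : (s' ++ [a]).length + t'.length ≤ N := by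
      simp at hlen ⊢; omega
    have hlen2 : (t' ++ [b]).length + s'.length ≤ N := by
      simp at hlen ⊢; omega
    rw [shPoly_split (msucc_map_apply_nil p hs hs0)]
    rw [L2 p (s' ++ [a]) t' b hs (fun ht' => ih _ _ hlen1 hs ht' hs0
      (fun i hi => ht0 i (by simp [hi])))]
    rw [L2 p (t' ++ [b]) s' a ht (fun hs' => ih _ _ hlen2 ht hs' ht0
      (fun i hi => hs0 i (by simp [hi])))]
    rw [shuffle_snoc_snoc, Multiset.map_add, Multiset.sum_add, Multiset.map_map,
      Multiset.map_map, shuffle_comm (t' ++ [b]) s', add_comm]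
    rfl

end Main

/-- for `p₁,…,p_{n+m} ∈ K⟨A⟩` with no constant term,
`sh(m_≻(p₁,…,pₙ) ⊗ m_≻(p_{n+1},…,p_{n+m})) = Σ_{ρ ∈ 1ₙ *′ 1ₘ} m_≻(p_{ρ(1)},…,p_{ρ(n+m)})`. -/
theorem shuffle_of_iterated_half_shuffles {A : Type*} {K : Type*} [CommRing K] [Algebra ℚ K]
    (n m : ℕ) (hn : 1 ≤ n) (hm : 1 ≤ m) (p : ℕ → List A →₀ K)
    (h0 : ∀ i < n + m, (p i) [] = 0) :
    shPoly (msucc ((List.range n).map p)) (msucc ((List.range' n m).map p)) =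
      ((mrW (List.range n) (List.range m)).map fun ρ => msucc (ρ.map p)).sum := by
  have hrange : mrW (List.range n) (List.range m) =
      shuffle (List.range n) (List.range' n m) := by
    unfold mrW
    congr 1
    rw [List.length_range, List.range'_eq_map_range]
    exact List.map_congr_left (fun i _ => Nat.add_comm i n)
  rw [hrange]
  apply mainL p (n + m)
  · simp
  · simp only [ne_eq, List.range_eq_nil]; omega
  · simp only [ne_eq, List.range'_eq_nil_iff]; omega
  · intro i hi
    exact h0 i (by simp at hi; omega)
  · intro i hi
    simp only [List.mem_range'_1] at hi
    exact h0 i (by omega)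
end
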